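/- Let U, V be in SO(3) and S = diag(s1, s2, s3) with s1 >= s2 >= |s3| and s2 + s3 > 0. Set Ltilde = U S V^T, Rhat = U V^T, and A = trace(Ltilde * Rhat^T) * I_3 - Ltilde * Rhat^T. Then det(A) = (s2 + s3)(s1 + s3)(s1 + s2) > 0; in particular A is invertible. (Proposition 6.) -/
import Mathlib


open Matrix

noncomputable section

/-- `SO3 R` means `R` is a rotation matrix: `Rᵀ R = I₃` and `det R = 1`. -/
def SO3 (R : Matrix (Fin 3) (Fin 3) ℝ) : Prop :=
  Rᵀ * R = 1 ∧ R.det = 1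

/-- Proposition 6: with `L̃ = U S Vᵀ`, `R̂ = U Vᵀ` (proper SVD, `s1 ≥ s2 ≥ |s3|`,
`s2 + s3 > 0`) and `A = tr(L̃ R̂ᵀ) I₃ - L̃ R̂ᵀ`, one has
`det A = (s2+s3)(s1+s3)(s1+s2) > 0`; in particular `A` is invertible. -/
theorem stmt10 (U V : Matrix (Fin 3) (Fin 3) ℝ) (hU : SO3 U) (hV : SO3 V)
    (s : Fin 3 → ℝ) (h12 : s 1 ≤ s 0) (h23 : |s 2| ≤ s 1) (hpos : 0 < s 1 + s 2)
    (Ltilde Rhat A : Matrix (Fin 3) (Fin 3) ℝ)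
    (hL : Ltilde = U * Matrix.diagonal s * Vᵀ) (hR : Rhat = U * Vᵀ)
    (hA : A = Matrix.trace (Ltilde * Rhatᵀ) • (1 : Matrix (Fin 3) (Fin 3) ℝ) -
      Ltilde * Rhatᵀ) :
    A.det = (s 1 + s 2) * (s 0 + s 2) * (s 0 + s 1) ∧ 0 < A.det ∧ IsUnit A := by
  obtain ⟨hU1, hU2⟩ := hU
  obtain ⟨hV1, hV2⟩ := hV
  have hUU : U * Uᵀ = 1 := mul_eq_one_comm.mp hU1
  have hM : Ltilde * Rhatᵀ = U * Matrix.diagonal s * Uᵀ := by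
    subst hL hR
    rw [transpose_mul, transpose_transpose]
    simp only [Matrix.mul_assoc]
    rw [← Matrix.mul_assoc Vᵀ V Uᵀ, hV1, Matrix.one_mul]
  have htr : Matrix.trace (Ltilde * Rhatᵀ) = s 0 + s 1 + s 2 := by
    rw [hM, Matrix.trace_mul_cycle, hU1, Matrix.one_mul,
      Matrix.trace_diagonal, Fin.sum_univ_three]
  set c : ℝ := s 0 + s 1 + s 2 with hc
  have hdiag : c • (1 : Matrix (Fin 3) (Fin 3) ℝ) - Matrix.diagonal s
      = Matrix.diagonal (fun i => c - s i) := by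
    ext i j
    by_cases h : i = j <;>
      simp [Matrix.diagonal, Matrix.one_apply, h]
  have hAeq : A = U * Matrix.diagonal (fun i => c - s i) * Uᵀ := by
    rw [hA, htr, hM, ← hdiag, Matrix.mul_sub, Matrix.sub_mul]
    congr 1
    rw [Matrix.mul_smul, Matrix.smul_mul, Matrix.mul_one, hUU]
  have hdet : A.det = (s 1 + s 2) * (s 0 + s 2) * (s 0 + s 1) := by
    rw [hAeq, Matrix.det_mul, Matrix.det_mul, hU2, Matrix.det_transpose, hU2,
      Matrix.det_diagonal, Fin.prod_univ_three]
    ring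
  have h2 := abs_le.mp h23
  have hpos' : 0 < (s 1 + s 2) * (s 0 + s 2) * (s 0 + s 1) := by
    have a1 : 0 < s 0 + s 2 := by linarith
    have a2 : 0 < s 0 + s 1 := by linarith
    positivity
  refine ⟨hdet, by rw [hdet]; exact hpos', ?_⟩
  rw [Matrix.isUnit_iff_isUnit_det, isUnit_iff_ne_zero, hdet]
  exact hpos'.ne'
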